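/- Let u = (u₁,u₂), v = (v₁,v₂) be linearly independent unit vectors in ℝ² and let f = (f₁, f₂) be a vector field on ℝ² with f₁, f₂ ∈ C²_c(ℝ²). Then for every x ∈ ℝ², X_u f₁(x) - X_v f₁(x) = -∂(J f)/∂x₂ (x) - u₁ · X¹_u(div f)(x) + v₁ · X¹_v(div f)(x). -/

import Mathlib

open MeasureTheory Matrix

noncomputable section

/-- Dot product on ℝ². -/
def dot2 (u v : ℝ × ℝ) : ℝ := u.1 * v.1 + u.2 * v.2

/-- `x^⊥ = (-x₂, x₁)`. -/
def perp2 (x : ℝ × ℝ) : ℝ × ℝ := (-x.2, x.1)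

/-- Divergent beam transform `X_u h (x) = ∫₀^∞ h(x + t u) dt`. -/
def Xbeam (u : ℝ × ℝ) (h : ℝ × ℝ → ℝ) (x : ℝ × ℝ) : ℝ :=
  ∫ t in Set.Ioi (0 : ℝ), h (x + t • u)

/-- First moment divergent beam transform `X¹_u h (x) = ∫₀^∞ t h(x + t u) dt`. -/
def Xmom (u : ℝ × ℝ) (h : ℝ × ℝ → ℝ) (x : ℝ × ℝ) : ℝ :=
  ∫ t in Set.Ioi (0 : ℝ), t * h (x + t • u)

/-- Directional derivative `D_u h = u · ∇ h`. -/
def Ddir (u : ℝ × ℝ) (h : ℝ × ℝ → ℝ) (x : ℝ × ℝ) : ℝ := fderiv ℝ h x u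

/-- Twice continuously differentiable, compactly supported. -/
def IsC2c (h : ℝ × ℝ → ℝ) : Prop := ContDiff ℝ 2 h ∧ HasCompactSupport h

/-- `div f = ∂f₁/∂x₁ + ∂f₂/∂x₂`. -/
def divf (f₁ f₂ : ℝ × ℝ → ℝ) (x : ℝ × ℝ) : ℝ :=
  fderiv ℝ f₁ x (1, 0) + fderiv ℝ f₂ x (0, 1)

/-- `curl f = ∂f₂/∂x₁ - ∂f₁/∂x₂`. -/
def curlf (f₁ f₂ : ℝ × ℝ → ℝ) (x : ℝ × ℝ) : ℝ :=
  fderiv ℝ f₂ x (1, 0) - fderiv ℝ f₁ x (0, 1)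

/-- Longitudinal V-line transform `L f = -X_u (f·u) + X_v (f·v)`. -/
def VlineL (u v : ℝ × ℝ) (f₁ f₂ : ℝ × ℝ → ℝ) (x : ℝ × ℝ) : ℝ :=
  - Xbeam u (fun y => f₁ y * u.1 + f₂ y * u.2) x
  + Xbeam v (fun y => f₁ y * v.1 + f₂ y * v.2) x

/-- Transverse V-line transform `T f = -X_u (f·u^⊥) + X_v (f·v^⊥)`. -/
def VlineT (u v : ℝ × ℝ) (f₁ f₂ : ℝ × ℝ → ℝ) (x : ℝ × ℝ) : ℝ :=
  - Xbeam u (fun y => f₁ y * (perp2 u).1 + f₂ y * (perp2 u).2) x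
  + Xbeam v (fun y => f₁ y * (perp2 v).1 + f₂ y * (perp2 v).2) x

/-- First moment longitudinal V-line transform `I f = -X¹_u (f·u) + X¹_v (f·v)`. -/
def VmomL (u v : ℝ × ℝ) (f₁ f₂ : ℝ × ℝ → ℝ) (x : ℝ × ℝ) : ℝ :=
  - Xmom u (fun y => f₁ y * u.1 + f₂ y * u.2) x
  + Xmom v (fun y => f₁ y * v.1 + f₂ y * v.2) x

/-- First moment transverse V-line transform `J f = -X¹_u (f·u^⊥) + X¹_v (f·v^⊥)`. -/
def VmomT (u v : ℝ × ℝ) (f₁ f₂ : ℝ × ℝ → ℝ) (x : ℝ × ℝ) : ℝ :=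
  - Xmom u (fun y => f₁ y * (perp2 u).1 + f₂ y * (perp2 u).2) x
  + Xmom v (fun y => f₁ y * (perp2 v).1 + f₂ y * (perp2 v).2) x

/-- Radon transform `R h (ψ, s) = ∫_ℝ h (s ψ + t ψ^⊥) dt`. -/
def Radon2 (h : ℝ × ℝ → ℝ) (ψ : ℝ × ℝ) (s : ℝ) : ℝ :=
  ∫ t : ℝ, h (s • ψ + t • perp2 ψ)

/-- The (vector-valued) star transform. -/
def starS (m : ℕ) (γ : Fin m → ℝ × ℝ) (c : Fin m → ℝ)
    (f₁ f₂ : ℝ × ℝ → ℝ) (x : ℝ × ℝ) : ℝ × ℝ :=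
  ∑ i, c i •
    (Xbeam (γ i) (fun y => f₁ y * (γ i).1 + f₂ y * (γ i).2) x,
     Xbeam (γ i) (fun y => f₁ y * (perp2 (γ i)).1 + f₂ y * (perp2 (γ i)).2) x)

/-- `γ(ψ) = -∑ cᵢ γᵢ / (ψ·γᵢ)`. -/
def starGamma (m : ℕ) (γ : Fin m → ℝ × ℝ) (c : Fin m → ℝ) (ψ : ℝ × ℝ) : ℝ × ℝ :=
  - ∑ i, (c i / dot2 ψ (γ i)) • γ i

/-- A star configuration is symmetric if `m = 2k` and, after re-indexing by a
permutation, `γᵢ = -γ_{k+i}` and `cᵢ = -c_{k+i}` for `i = 1, …, k`. -/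
def StarSymmetric (m : ℕ) (γ : Fin m → ℝ × ℝ) (c : Fin m → ℝ) : Prop :=
  ∃ k : ℕ, ∃ hk : m = 2 * k, ∃ σ : Equiv.Perm (Fin m),
    ∀ i : Fin m, ∀ hi : (i : ℕ) < k,
      γ (σ i) = - γ (σ ⟨(i : ℕ) + k, by omega⟩) ∧
      c (σ i) = - c (σ ⟨(i : ℕ) + k, by omega⟩)

section Aux

open Set Filter

/-- A unit vector of `ℝ × ℝ` has (sup) norm at least `1/2`. -/
lemma half_le_norm_of_unit {u : ℝ × ℝ} (hu : u.1 ^ 2 + u.2 ^ 2 = 1) : (1:ℝ)/2 ≤ ‖u‖ := by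
  by_contra h
  push_neg at h
  have h1 : |u.1| < 1/2 := lt_of_le_of_lt (by simpa [Real.norm_eq_abs] using norm_fst_le u) h
  have h2 : |u.2| < 1/2 := lt_of_le_of_lt (by simpa [Real.norm_eq_abs] using norm_snd_le u) h
  nlinarith [sq_abs u.1, sq_abs u.2, abs_nonneg u.1, abs_nonneg u.2]

/-- Points on the ray escape any ball. -/
lemma escape_lemma {u x : ℝ × ℝ} (hu : (1:ℝ)/2 ≤ ‖u‖) {R t : ℝ} (hR : 0 ≤ R)
    (ht : 2*(R+‖x‖) < |t|) : R < ‖x + t • u‖ := by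
  have h1 : ‖t • u‖ ≤ ‖x + t • u‖ + ‖x‖ := by
    calc ‖t • u‖ = ‖(x + t • u) - x‖ := by rw [add_sub_cancel_left]
    _ ≤ ‖x + t • u‖ + ‖x‖ := norm_sub_le _ _
  have h2 : ‖t • u‖ = |t| * ‖u‖ := by rw [norm_smul, Real.norm_eq_abs]
  nlinarith [norm_nonneg x, norm_nonneg (x + t • u), abs_nonneg t]

/-- Radius bound for a compactly supported function. -/
lemma exists_radius {F : Type*} [NormedAddCommGroup F] {g : ℝ × ℝ → F}
    (hg : HasCompactSupport g) :
    ∃ R, 0 ≤ R ∧ ∀ y : ℝ × ℝ, R < ‖y‖ → g y = 0 := by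
  obtain ⟨R, hR0, hR⟩ := hg.isBounded.subset_closedBall_lt 0 0
  refine ⟨R, hR0.le, fun y hy => ?_⟩
  apply image_eq_zero_of_notMem_tsupport
  intro hmem
  have := hR hmem
  simp only [Metric.mem_closedBall, dist_zero_right] at this
  linarith

/-- Radius bound for a compactly supported function and its `fderiv`. -/
lemma exists_radius' {g : ℝ × ℝ → ℝ} (hg : HasCompactSupport g) :
    ∃ R, 0 ≤ R ∧ (∀ y : ℝ × ℝ, R < ‖y‖ → g y = 0) ∧
      (∀ y : ℝ × ℝ, R < ‖y‖ → fderiv ℝ g y = 0) := by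
  obtain ⟨R, hR0, hR⟩ := hg.isBounded.subset_closedBall_lt 0 0
  refine ⟨R, hR0.le, fun y hy => ?_, fun y hy => ?_⟩
  · apply image_eq_zero_of_notMem_tsupport
    intro hmem
    have := hR hmem
    simp only [Metric.mem_closedBall, dist_zero_right] at this
    linarith
  · by_contra h
    have hmem : y ∈ tsupport g :=
      support_fderiv_subset (𝕜 := ℝ) (Function.mem_support.mpr h)
    have := hR hmem
    simp only [Metric.mem_closedBall, dist_zero_right] at this
    linarith

/-- Sup-norm bound for a continuous compactly supported function. -/
lemma exists_norm_bound {F : Type*} [NormedAddCommGroup F] {g : ℝ × ℝ → F}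
    (hc : Continuous g) (hs : HasCompactSupport g) : ∃ C, 0 ≤ C ∧ ∀ y, ‖g y‖ ≤ C := by
  obtain ⟨C, hC⟩ := (hs.isCompact.image_of_continuousOn hc.norm.continuousOn).bddAbove
  refine ⟨max C 0, le_max_right _ _, fun y => ?_⟩
  by_cases hy : y ∈ tsupport g
  · exact le_max_of_le_left (hC (Set.mem_image_of_mem _ hy))
  · simp [image_eq_zero_of_notMem_tsupport hy]

/-- Integrability along the ray, with a continuous prefactor. -/
lemma integrableOn_line {F : Type*} [NormedAddCommGroup F] [NormedSpace ℝ F]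
    {u x : ℝ × ℝ} (hu : (1:ℝ)/2 ≤ ‖u‖) {h : ℝ × ℝ → F} (hc : Continuous h) {R : ℝ}
    (hR : 0 ≤ R) (h0 : ∀ y, R < ‖y‖ → h y = 0) {k : ℝ → ℝ} (hk : Continuous k) :
    IntegrableOn (fun t => k t • h (x + t • u)) (Set.Ioi (0:ℝ)) volume := by
  apply Integrable.integrableOn
  apply Continuous.integrable_of_hasCompactSupport
    (hk.smul (hc.comp (by continuity)))
  apply HasCompactSupport.intro (isCompact_Icc
    (a := -(2*(R+‖x‖)+1)) (b := 2*(R+‖x‖)+1))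
  intro t ht
  simp only [Set.mem_Icc, not_and_or, not_le] at ht
  have hRx : 0 ≤ R + ‖x‖ := by positivity
  have habs : 2*(R+‖x‖) < |t| := by
    rcases ht with h' | h'
    · rw [abs_of_neg (by linarith)]; linarith
    · rw [abs_of_pos (by linarith)]; linarith
  simp [h0 _ (escape_lemma hu hR habs)]

/-- Differentiation under the integral sign for the first moment transform. -/
lemma hasFDerivAt_Xmom {u : ℝ × ℝ} (hu : (1:ℝ)/2 ≤ ‖u‖) {g : ℝ × ℝ → ℝ}
    (hg : ContDiff ℝ 1 g) (hgs : HasCompactSupport g) (x : ℝ × ℝ) :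
    HasFDerivAt (fun x => ∫ t in Set.Ioi (0:ℝ), t * g (x + t • u))
      (∫ t in Set.Ioi (0:ℝ), t • fderiv ℝ g (x + t • u)) x := by
  obtain ⟨R, hR0, h0g, h0g'⟩ := exists_radius' hgs
  obtain ⟨C, hC0, hC⟩ := exists_norm_bound (hg.continuous_fderiv one_ne_zero) (hgs.fderiv (𝕜 := ℝ))
  set T : ℝ := 2*(R+‖x‖+1) with hT
  have hT0 : 0 ≤ T := by positivity
  apply hasFDerivAt_integral_of_dominated_of_fderiv_le (𝕜 := ℝ)
    (F := fun y t => t * g (y + t • u)) (F' := fun y t => t • fderiv ℝ g (y + t • u))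
    (x₀ := x) (μ := volume.restrict (Set.Ioi (0:ℝ)))
    (bound := Set.indicator (Set.Icc 0 T) (fun _ => T * C)) (s := Metric.ball x 1) (Metric.ball_mem_nhds x one_pos)
  · filter_upwards with y
    exact (Continuous.aestronglyMeasurable (by
      exact continuous_id.mul ((hg.continuous).comp (by continuity)))).restrict
  · simpa [smul_eq_mul, IntegrableOn] using integrableOn_line (x := x) hu hg.continuous hR0 h0g
      (k := fun t : ℝ => t) continuous_id
  · exact (Continuous.aestronglyMeasurable (continuous_id.smul
      ((hg.continuous_fderiv one_ne_zero).comp (by continuity)))).restrict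
  · filter_upwards [ae_restrict_mem measurableSet_Ioi] with t ht y hy
    have ht0 : (0:ℝ) < t := ht
    have hynorm : ‖y‖ < ‖x‖ + 1 := by
      calc ‖y‖ ≤ ‖x‖ + ‖y - x‖ := by
            simpa using norm_add_le x (y - x)
        _ < ‖x‖ + 1 := by
            have := Metric.mem_ball.mp hy
            rw [dist_eq_norm] at this; linarith
    by_cases hcase : t ≤ T
    · have hmem : t ∈ Set.Icc (0:ℝ) T := ⟨ht0.le, hcase⟩
      rw [Set.indicator_of_mem hmem]
      calc ‖t • fderiv ℝ g (y + t • u)‖ = t * ‖fderiv ℝ g (y + t • u)‖ := by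
            rw [norm_smul, Real.norm_eq_abs, abs_of_pos ht0]
        _ ≤ T * C := by
            apply mul_le_mul hcase (hC _) (norm_nonneg _) hT0
    · push_neg at hcase
      have : fderiv ℝ g (y + t • u) = 0 := by
        apply h0g'
        apply escape_lemma hu hR0
        rw [abs_of_pos ht0]
        linarith
      rw [this]
      simp only [smul_zero, norm_zero]
      exact Set.indicator_nonneg (fun _ _ => by positivity) t
  · apply Integrable.restrict (s := Set.Ioi (0:ℝ))
    rw [integrable_indicator_iff measurableSet_Icc]
    exact integrableOn_const measure_Icc_lt_top.ne
  · filter_upwards with t y hy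
    have h1 : HasFDerivAt (fun y : ℝ × ℝ => y + t • u)
        (ContinuousLinearMap.id ℝ (ℝ × ℝ)) y := (hasFDerivAt_id y).add_const _
    have h2 : HasFDerivAt g (fderiv ℝ g (y + t • u)) (y + t • u) :=
      (hg.differentiable one_ne_zero (y + t • u)).hasFDerivAt
    have h3 := h2.comp y h1
    rw [ContinuousLinearMap.comp_id] at h3
    exact h3.const_mul t

/-- Integrability of the `fderiv`-applied function needed for `integral_apply`. -/
lemma integrable_fderiv_line {u x : ℝ × ℝ} (hu : (1:ℝ)/2 ≤ ‖u‖) {g : ℝ × ℝ → ℝ}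
    (hg : ContDiff ℝ 1 g) (hgs : HasCompactSupport g) :
    IntegrableOn (fun t => t • fderiv ℝ g (x + t • u)) (Set.Ioi (0:ℝ)) volume := by
  obtain ⟨R, hR0, _, h0g'⟩ := exists_radius' hgs
  exact integrableOn_line hu (hg.continuous_fderiv one_ne_zero) hR0 h0g' continuous_id

/-- Value of the derivative of the first-moment transform. -/
lemma fderiv_Xmom_apply {u : ℝ × ℝ} (hu : (1:ℝ)/2 ≤ ‖u‖) {g : ℝ × ℝ → ℝ}
    (hg : ContDiff ℝ 1 g) (hgs : HasCompactSupport g) (x : ℝ × ℝ) (w : ℝ × ℝ) :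
    fderiv ℝ (Xmom u g) x w = ∫ t in Set.Ioi (0:ℝ), t * fderiv ℝ g (x + t • u) w := by
  have h := hasFDerivAt_Xmom hu hg hgs x
  have hXmom : Xmom u g = fun x => ∫ t in Set.Ioi (0:ℝ), t * g (x + t • u) := rfl
  rw [hXmom, h.fderiv]
  rw [ContinuousLinearMap.integral_apply (integrable_fderiv_line hu hg hgs)]
  simp [smul_eq_mul]

/-- Integration by parts on the ray. -/
lemma ibp_line {u x : ℝ × ℝ} (hu : (1:ℝ)/2 ≤ ‖u‖) {f : ℝ × ℝ → ℝ}
    (hf : ContDiff ℝ 1 f) (hfs : HasCompactSupport f) :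
    ∫ t in Set.Ioi (0:ℝ), t * fderiv ℝ f (x + t • u) u
      = - ∫ t in Set.Ioi (0:ℝ), f (x + t • u) := by
  obtain ⟨R, hR0, h0f, h0f'⟩ := exists_radius' hfs
  set φ : ℝ → ℝ := fun t => f (x + t • u) with hφ
  have hφd : ∀ t : ℝ, HasDerivAt φ (fderiv ℝ f (x + t • u) u) t := by
    intro t
    have h1 : HasDerivAt (fun t : ℝ => x + t • u) u t := by
      simpa using ((hasDerivAt_id t).smul_const u).const_add x
    exact (hf.differentiable one_ne_zero (x + t • u)).hasFDerivAt.comp_hasDerivAt t h1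
  have hψ : ∀ t : ℝ, HasDerivAt (fun t => t * φ t)
      (φ t + t * fderiv ℝ f (x + t • u) u) t := by
    intro t
    have := (hasDerivAt_id' t).fun_mul (hφd t)
    simpa [add_comm, mul_comm] using this
  have hint1 : IntegrableOn φ (Set.Ioi (0:ℝ)) volume := by
    simpa [smul_eq_mul] using integrableOn_line (x := x) hu hf.continuous hR0 h0f
      (k := fun _ : ℝ => (1:ℝ)) continuous_const
  have hint2 : IntegrableOn (fun t => t * fderiv ℝ f (x + t • u) u)
      (Set.Ioi (0:ℝ)) volume := by
    have hc : Continuous (fun y => fderiv ℝ f y u) :=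
      (ContinuousLinearMap.apply ℝ ℝ u).continuous.comp (hf.continuous_fderiv one_ne_zero)
    have h0 : ∀ y, R < ‖y‖ → fderiv ℝ f y u = 0 := fun y hy => by rw [h0f' y hy]; rfl
    simpa [smul_eq_mul] using integrableOn_line (x := x) hu hc hR0 h0
      (k := fun t : ℝ => t) continuous_id
  have htend : Filter.Tendsto (fun t => t * φ t) Filter.atTop (nhds 0) := by
    have hev : (fun t => t * φ t) =ᶠ[Filter.atTop] (fun _ => (0:ℝ)) := by
      filter_upwards [Filter.eventually_ge_atTop (2*(R+‖x‖)+1)] with t ht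
      have hRx : 0 ≤ R + ‖x‖ := by positivity
      have : φ t = 0 := h0f _ (escape_lemma hu hR0 (by rw [abs_of_pos (by linarith)]; linarith))
      simp [this]
    exact Filter.Tendsto.congr' hev.symm tendsto_const_nhds
  have hFTC := integral_Ioi_of_hasDerivAt_of_tendsto' (a := 0)
    (f := fun t => t * φ t) (f' := fun t => φ t + t * fderiv ℝ f (x + t • u) u)
    (fun t _ => hψ t) (hint1.add hint2) htend
  rw [integral_add hint1 hint2] at hFTC
  simp only [zero_mul, sub_zero] at hFTC
  linarith [hFTC]

/-- Pointwise identity: `∂₂(f·u^⊥) - u₁ div f = -(u·∇)f₁`. -/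
lemma pointwise_id (u : ℝ × ℝ) {f₁ f₂ : ℝ × ℝ → ℝ}
    (h1 : Differentiable ℝ f₁) (h2 : Differentiable ℝ f₂) (y : ℝ × ℝ) :
    fderiv ℝ (fun y => f₁ y * (perp2 u).1 + f₂ y * (perp2 u).2) y (0,1)
      - u.1 * divf f₁ f₂ y = - fderiv ℝ f₁ y u := by
  have e1 : fderiv ℝ (fun y => f₁ y * (perp2 u).1 + f₂ y * (perp2 u).2) y
      = (perp2 u).1 • fderiv ℝ f₁ y + (perp2 u).2 • fderiv ℝ f₂ y := by
    rw [fderiv_fun_add ((h1 y).mul_const _) ((h2 y).mul_const _),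
      fderiv_mul_const (h1 y), fderiv_mul_const (h2 y)]
  have e2 : (u : ℝ × ℝ) = u.1 • ((1:ℝ),(0:ℝ)) + u.2 • ((0:ℝ),(1:ℝ)) := by
    ext <;> simp
  have e3 : fderiv ℝ f₁ y u
      = u.1 * fderiv ℝ f₁ y (1,0) + u.2 * fderiv ℝ f₁ y (0,1) := by
    conv_lhs => rw [e2]
    rw [map_add]
    simp only [Prod.smul_mk, smul_eq_mul, mul_one, mul_zero]
    rw [show ((u.1,(0:ℝ)) : ℝ × ℝ) = u.1 • ((1:ℝ),(0:ℝ)) from by simp,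
      show (((0:ℝ),u.2) : ℝ × ℝ) = u.2 • ((0:ℝ),(1:ℝ)) from by simp,
      ContinuousLinearMap.map_smul, ContinuousLinearMap.map_smul]
    simp
  rw [e1, e3]
  simp only [divf, perp2, ContinuousLinearMap.add_apply, ContinuousLinearMap.smul_apply,
    smul_eq_mul]
  ring

/-- Key per-direction identity. -/
lemma key_identity {u : ℝ × ℝ} (hu : (1:ℝ)/2 ≤ ‖u‖) {f₁ f₂ : ℝ × ℝ → ℝ}
    (hf₁ : IsC2c f₁) (hf₂ : IsC2c f₂) (x : ℝ × ℝ) :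
    fderiv ℝ (Xmom u (fun y => f₁ y * (perp2 u).1 + f₂ y * (perp2 u).2)) x (0,1)
      - u.1 * Xmom u (divf f₁ f₂) x = Xbeam u f₁ x := by
  obtain ⟨hf₁c, hf₁s⟩ := hf₁
  obtain ⟨hf₂c, hf₂s⟩ := hf₂
  set g : ℝ × ℝ → ℝ := fun y => f₁ y * (perp2 u).1 + f₂ y * (perp2 u).2 with hgdef
  have hgc : ContDiff ℝ 1 g :=
    ((hf₁c.of_le one_le_two).mul contDiff_const).add
      ((hf₂c.of_le one_le_two).mul contDiff_const)
  have hgs : HasCompactSupport g := by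
    exact (hf₁s.mul_right).add (hf₂s.mul_right)
  obtain ⟨R₁, hR₁0, h0f₁, h0f₁'⟩ := exists_radius' hf₁s
  obtain ⟨R₂, hR₂0, h0f₂, h0f₂'⟩ := exists_radius' hf₂s
  obtain ⟨R₃, hR₃0, h0g, h0g'⟩ := exists_radius' hgs
  set R : ℝ := max (max R₁ R₂) R₃ with hRdef
  have hR0 : 0 ≤ R := le_trans hR₁0 (le_trans (le_max_left _ _) (le_max_left _ _))
  have hR₁le : R₁ ≤ R := le_trans (le_max_left _ _) (le_max_left _ _)
  have hR₂le : R₂ ≤ R := le_trans (le_max_right _ _) (le_max_left _ _)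
  have hR₃le : R₃ ≤ R := le_max_right _ _
  -- continuity of divf
  have hdc : Continuous (divf f₁ f₂) := by
    have c1 : Continuous (fun y => fderiv ℝ f₁ y ((1:ℝ),(0:ℝ))) :=
      (ContinuousLinearMap.apply ℝ ℝ ((1:ℝ),(0:ℝ))).continuous.comp
        (hf₁c.continuous_fderiv two_ne_zero)
    have c2 : Continuous (fun y => fderiv ℝ f₂ y ((0:ℝ),(1:ℝ))) :=
      (ContinuousLinearMap.apply ℝ ℝ ((0:ℝ),(1:ℝ))).continuous.comp
        (hf₂c.continuous_fderiv two_ne_zero)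
    exact c1.add c2
  have hd0 : ∀ y : ℝ × ℝ, R < ‖y‖ → divf f₁ f₂ y = 0 := by
    intro y hy
    have e1 : fderiv ℝ f₁ y = 0 := h0f₁' y (lt_of_le_of_lt hR₁le hy)
    have e2 : fderiv ℝ f₂ y = 0 := h0f₂' y (lt_of_le_of_lt hR₂le hy)
    simp [divf, e1, e2]
  -- step 1 : derivative under the integral
  have step1 : fderiv ℝ (Xmom u g) x (0,1)
      = ∫ t in Set.Ioi (0:ℝ), t * fderiv ℝ g (x + t • u) (0,1) :=
    fderiv_Xmom_apply hu hgc hgs x (0,1)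
  -- step 2 : pull the constant inside
  have step2 : u.1 * Xmom u (divf f₁ f₂) x
      = ∫ t in Set.Ioi (0:ℝ), t * (u.1 * divf f₁ f₂ (x + t • u)) := by
    rw [Xmom, ← MeasureTheory.integral_const_mul]
    congr 1
    funext t
    ring
  -- integrability of the two integrands
  have hint1 : IntegrableOn (fun t => t * fderiv ℝ g (x + t • u) (0,1))
      (Set.Ioi (0:ℝ)) volume := by
    have hc : Continuous (fun y => fderiv ℝ g y ((0:ℝ),(1:ℝ))) :=
      (ContinuousLinearMap.apply ℝ ℝ ((0:ℝ),(1:ℝ))).continuous.comp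
        (hgc.continuous_fderiv one_ne_zero)
    have h0 : ∀ y, R < ‖y‖ → fderiv ℝ g y ((0:ℝ),(1:ℝ)) = 0 := fun y hy => by
      rw [h0g' y (lt_of_le_of_lt hR₃le hy)]; rfl
    simpa [smul_eq_mul] using integrableOn_line (x := x) hu hc hR0 h0
      (k := fun t : ℝ => t) continuous_id
  have hint2 : IntegrableOn (fun t => t * (u.1 * divf f₁ f₂ (x + t • u)))
      (Set.Ioi (0:ℝ)) volume := by
    have hc : Continuous (fun y => u.1 * divf f₁ f₂ y) := continuous_const.mul hdc
    have h0 : ∀ y, R < ‖y‖ → u.1 * divf f₁ f₂ y = 0 := fun y hy => by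
      rw [hd0 y hy, mul_zero]
    simpa [smul_eq_mul] using integrableOn_line (x := x) hu hc hR0 h0
      (k := fun t : ℝ => t) continuous_id
  rw [step1, step2, ← MeasureTheory.integral_sub hint1 hint2]
  have hptw : ∀ t : ℝ, t * fderiv ℝ g (x + t • u) (0,1)
      - t * (u.1 * divf f₁ f₂ (x + t • u))
      = - (t * fderiv ℝ f₁ (x + t • u) u) := by
    intro t
    have := pointwise_id u (hf₁c.differentiable two_ne_zero)
      (hf₂c.differentiable two_ne_zero) (x + t • u)
    have e : t * (fderiv ℝ g (x + t • u) (0,1) - u.1 * divf f₁ f₂ (x + t • u))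
        = t * (- fderiv ℝ f₁ (x + t • u) u) := by rw [this]
    ring_nf
    ring_nf at e
    linarith [e]
  calc (∫ t in Set.Ioi (0:ℝ), (t * fderiv ℝ g (x + t • u) (0,1)
        - t * (u.1 * divf f₁ f₂ (x + t • u))))
      = ∫ t in Set.Ioi (0:ℝ), - (t * fderiv ℝ f₁ (x + t • u) u) := by
        congr 1; funext t; exact hptw t
    _ = - ∫ t in Set.Ioi (0:ℝ), t * fderiv ℝ f₁ (x + t • u) u := by
        rw [MeasureTheory.integral_neg]
    _ = ∫ t in Set.Ioi (0:ℝ), f₁ (x + t • u) := by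
        rw [ibp_line hu (hf₁c.of_le one_le_two) hf₁s]; ring
    _ = Xbeam u f₁ x := rfl

end Aux

/-- `X_u f₁ - X_v f₁ = -∂(J f)/∂x₂ - u₁ X¹_u(div f) + v₁ X¹_v(div f)`. -/
theorem stmt12 (u v : ℝ × ℝ) (hu : u.1 ^ 2 + u.2 ^ 2 = 1) (hv : v.1 ^ 2 + v.2 ^ 2 = 1)
    (huv : LinearIndependent ℝ ![u, v])
    (f₁ f₂ : ℝ × ℝ → ℝ) (hf₁ : IsC2c f₁) (hf₂ : IsC2c f₂) (x : ℝ × ℝ) :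
    Xbeam u f₁ x - Xbeam v f₁ x
      = -fderiv ℝ (VmomT u v f₁ f₂) x (0, 1)
        - u.1 * Xmom u (divf f₁ f₂) x + v.1 * Xmom v (divf f₁ f₂) x := by
  have hu2 : (1:ℝ)/2 ≤ ‖u‖ := half_le_norm_of_unit hu
  have hv2 : (1:ℝ)/2 ≤ ‖v‖ := half_le_norm_of_unit hv
  set gu : ℝ × ℝ → ℝ := fun y => f₁ y * (perp2 u).1 + f₂ y * (perp2 u).2 with hgu
  set gv : ℝ × ℝ → ℝ := fun y => f₁ y * (perp2 v).1 + f₂ y * (perp2 v).2 with hgv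
  have hguc : ContDiff ℝ 1 gu :=
    ((hf₁.1.of_le one_le_two).mul contDiff_const).add
      ((hf₂.1.of_le one_le_two).mul contDiff_const)
  have hgvc : ContDiff ℝ 1 gv :=
    ((hf₁.1.of_le one_le_two).mul contDiff_const).add
      ((hf₂.1.of_le one_le_two).mul contDiff_const)
  have hgus : HasCompactSupport gu := (hf₁.2.mul_right).add (hf₂.2.mul_right)
  have hgvs : HasCompactSupport gv := (hf₁.2.mul_right).add (hf₂.2.mul_right)
  have hdu : DifferentiableAt ℝ (Xmom u gu) x :=
    (hasFDerivAt_Xmom hu2 hguc hgus x).differentiableAt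
  have hdv : DifferentiableAt ℝ (Xmom v gv) x :=
    (hasFDerivAt_Xmom hv2 hgvc hgvs x).differentiableAt
  have e : fderiv ℝ (VmomT u v f₁ f₂) x (0,1)
      = -(fderiv ℝ (Xmom u gu) x (0,1)) + fderiv ℝ (Xmom v gv) x (0,1) := by
    have hfun : VmomT u v f₁ f₂ = fun y => -(Xmom u gu y) + Xmom v gv y := rfl
    rw [hfun, fderiv_fun_add hdu.fun_neg hdv, fderiv_fun_neg]
    simp
  have ku := key_identity hu2 hf₁ hf₂ x
  have kv := key_identity hv2 hf₁ hf₂ x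
  rw [e]
  rw [← hgu] at ku
  rw [← hgv] at kv
  linarith [ku, kv]
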